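/- arXiv:2509.10013 — 2 statements merged into one kernel-verified Lean document; each statement's English description precedes it below -/
import Mathlib

section
/- Let a₁, a₂ ∈ ℂ with a₁ − a₂ ∉ Λ_τ and a₁, a₂ ∉ S, let c, A ∈ ℂ, let φ_{a,c}(z) = c + ζ(z−a₁) + ζ(z−a₂) − ζ(z) − (1/2)(ζ(z+p) + ζ(z−p)), and set g = φ_{a,c}' + φ_{a,c}² − q(·;A). Then g has at most a simple pole at z = 0, and its residue there equals 2(ζ(a₁) + ζ(a₂) − c); in particular g extends holomorphically across 0 if and only if c = ζ(a₁) + ζ(a₂). -/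
open Complex Filter Topology

noncomputable section

/-- The lattice `Λ_τ = ℤ + τℤ`. -/
def Lam (τ : ℂ) : Set ℂ := {ω | ∃ m n : ℤ, ω = (m : ℂ) + (n : ℂ) * τ}

/-- The nonzero lattice points. -/
def Lam' (τ : ℂ) : Set ℂ := {ω | ω ∈ Lam τ ∧ ω ≠ 0}

/-- The Weierstrass elliptic function `℘(z; τ)`. -/
def wp (τ z : ℂ) : ℂ :=
  1 / z ^ 2 + ∑' ω : Lam' τ, (1 / (z - (ω : ℂ)) ^ 2 - 1 / (ω : ℂ) ^ 2)

/-- The Weierstrass zeta function `ζ(z; τ)`. -/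
def wzeta (τ z : ℂ) : ℂ :=
  1 / z + ∑' ω : Lam' τ, (1 / (z - (ω : ℂ)) + 1 / (ω : ℂ) + z / (ω : ℂ) ^ 2)

/-- The Weierstrass sigma function `σ(z; τ)`. -/
def wsigma (τ z : ℂ) : ℂ :=
  z * ∏' ω : Lam' τ,
    ((1 - z / (ω : ℂ)) * Complex.exp (z / (ω : ℂ) + z ^ 2 / (2 * (ω : ℂ) ^ 2)))

/-- `℘'(z; τ)`. -/
def wpd (τ : ℂ) : ℂ → ℂ := deriv (wp τ)

/-- `℘''(z; τ)`. -/
def wpdd (τ : ℂ) : ℂ → ℂ := deriv (deriv (wp τ))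

/-- The constant `B(A)`. -/
def Bc (τ p A : ℂ) : ℂ :=
  A ^ 2 - wzeta τ (2 * p) * A - 3 / 4 * wp τ (2 * p) - 2 * wp τ p

/-- The potential `q(z; A)`. -/
def qpot (τ p A z : ℂ) : ℂ :=
  2 * wp τ z + 3 / 4 * (wp τ (z + p) + wp τ (z - p))
    + A * (wzeta τ (z + p) - wzeta τ (z - p)) + Bc τ p A

/-- The singular set `S = Λ_τ ∪ (p + Λ_τ) ∪ (−p + Λ_τ)`. -/
def Sset (τ p : ℂ) : Set ℂ :=
  Lam τ ∪ {z | z - p ∈ Lam τ} ∪ {z | z + p ∈ Lam τ}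

/-- The unique elliptic solution `Φ_e(z; A)` of the second symmetric product equation. -/
def Phie (τ p A z : ℂ) : ℂ :=
  wp τ z + (A / 2 - 3 * wpdd τ p / (8 * wpd τ p)) * (wzeta τ (z + p) - wzeta τ (z - p))
    - A ^ 2 + (wpdd τ p / (2 * wpd τ p) - wzeta τ p) * A
    - wp τ p + 3 / 4 * (wpdd τ p / wpd τ p) * wzeta τ p
    + 3 / 16 * (wpdd τ p ^ 2 / wpd τ p ^ 2)

/-- The cubic factor `Y₁(A)`. -/
def Y1 (τ p A : ℂ) : ℂ :=
  A ^ 3 - 5 * wpdd τ p / (4 * wpd τ p) * A ^ 2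
    + 3 * (wp τ p + wpdd τ p ^ 2 / (16 * wpd τ p ^ 2)) * A
    + wpd τ p / 2 - 9 * wpdd τ p / (4 * wpd τ p) * wp τ p
    + 9 / 64 * (wpdd τ p ^ 3 / wpd τ p ^ 3)

/-- The cubic factor `Y₂(A)`. -/
def Y2 (τ p A : ℂ) : ℂ :=
  A ^ 3 - wpdd τ p / (4 * wpd τ p) * A ^ 2
    - 5 / 16 * (wpdd τ p ^ 2 / wpd τ p ^ 2) * A
    + 2 * wpd τ p - 3 / 64 * (wpdd τ p ^ 3 / wpd τ p ^ 3)

/-- The logarithmic derivative `φ_{a,c} = y_{a,c}'/y_{a,c}`. -/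
def phiac (τ p a₁ a₂ c z : ℂ) : ℂ :=
  c + wzeta τ (z - a₁) + wzeta τ (z - a₂) - wzeta τ z
    - 1 / 2 * (wzeta τ (z + p) + wzeta τ (z - p))

/-- The error function `g = φ_{a,c}' + φ_{a,c}² − q(·;A)`. -/
def gfun (τ p a₁ a₂ c A z : ℂ) : ℂ :=
  deriv (phiac τ p a₁ a₂ c) z + (phiac τ p a₁ a₂ c z) ^ 2 - qpot τ p A z

-- injection into Fin 2 → ℤ
lemma lam'_repr {τ : ℂ} (ω : Lam' τ) : ∃ x : Fin 2 → ℤ, (ω : ℂ) = (x 1 : ℂ) + (x 0 : ℂ) * τ := by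
  obtain ⟨⟨m, n, h⟩, -⟩ := ω.2
  exact ⟨![n, m], by simpa using h⟩

def jmap {τ : ℂ} (ω : Lam' τ) : Fin 2 → ℤ := (lam'_repr ω).choose

lemma jmap_spec {τ : ℂ} (ω : Lam' τ) : (ω : ℂ) = (jmap ω 1 : ℂ) + (jmap ω 0 : ℂ) * τ :=
  (lam'_repr ω).choose_spec

lemma jmap_inj {τ : ℂ} : Function.Injective (jmap (τ := τ)) := by
  intro a b h
  have := (jmap_spec a).trans (by rw [h, ← jmap_spec b])
  exact Subtype.ext this

lemma jmap_ne_zero {τ : ℂ} (ω : Lam' τ) : jmap ω ≠ 0 := by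
  intro h
  have := jmap_spec ω
  rw [h] at this
  simp at this
  exact ω.2.2 this

lemma norm_lam'_ge {τ : ℂ} (hτ : 0 < τ.im) (ω : Lam' τ) :
    EisensteinSeries.r ⟨τ, hτ⟩ * ‖jmap ω‖ ≤ ‖(ω : ℂ)‖ := by
  have := EisensteinSeries.r_mul_max_le (⟨τ, hτ⟩ : UpperHalfPlane) (jmap_ne_zero ω)
  convert this using 2
  rw [jmap_spec ω]
  push_cast
  ring_nf

lemma summable_lam' {τ : ℂ} (hτ : 0 < τ.im) :
    Summable fun ω : Lam' τ => 1 / ‖(ω : ℂ)‖ ^ 3 := by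
  set r := EisensteinSeries.r ⟨τ, hτ⟩ with hr
  have hrpos : 0 < r := EisensteinSeries.r_pos _
  have h1 : Summable fun x : Fin 2 → ℤ => ‖x‖ ^ (-(3:ℝ)) :=
    EisensteinSeries.summable_one_div_norm_rpow (by norm_num)
  have h2 : Summable fun ω : Lam' τ => ‖jmap ω‖ ^ (-(3:ℝ)) :=
    h1.comp_injective jmap_inj
  apply Summable.of_nonneg_of_le (fun ω => by positivity)
    (fun ω => ?_) (h2.mul_left (r ^ 3)⁻¹)
  have hj : 0 < ‖jmap ω‖ := norm_pos_iff.mpr (jmap_ne_zero ω)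
  have hb := norm_lam'_ge hτ ω
  have hω : 0 < ‖(ω : ℂ)‖ := lt_of_lt_of_le (by positivity) hb
  have hcast : ‖jmap ω‖ ^ (-(3:ℝ)) = (‖jmap ω‖ ^ 3)⁻¹ := by
    rw [Real.rpow_neg (norm_nonneg _)]
    rw [show (3:ℝ) = ((3:ℕ):ℝ) by norm_num, Real.rpow_natCast]
  rw [hcast]
  rw [one_div, ← mul_inv]
  rw [inv_le_inv₀ (by positivity) (by positivity)]
  calc r ^ 3 * ‖jmap ω‖ ^ 3 = (r * ‖jmap ω‖) ^ 3 := by ring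
    _ ≤ ‖(ω : ℂ)‖ ^ 3 := pow_le_pow_left₀ (by positivity) hb 3

lemma finite_lam' {τ : ℂ} (hτ : 0 < τ.im) (M : ℝ) :
    {ω : Lam' τ | ‖(ω : ℂ)‖ ≤ M}.Finite := by
  set r := EisensteinSeries.r ⟨τ, hτ⟩ with hr
  have hrpos : 0 < r := EisensteinSeries.r_pos _
  have hball : (Metric.closedBall (0 : Fin 2 → ℤ) (M / r)).Finite :=
    (isCompact_closedBall _ _).finite
      (IsDiscrete.of_nhdsWithin fun x _ => nhdsWithin_le_nhds.trans (congrFun (nhds_discrete _) x).le)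
  apply Set.Finite.of_finite_image _ jmap_inj.injOn
  apply hball.subset
  rintro x ⟨ω, hω, rfl⟩
  simp only [Metric.mem_closedBall, dist_zero_right]
  have hb := norm_lam'_ge hτ ω
  rw [le_div_iff₀ hrpos]
  calc ‖jmap ω‖ * r = r * ‖jmap ω‖ := by ring
    _ ≤ ‖(ω : ℂ)‖ := hb
    _ ≤ M := hω

lemma analyticAt_tsum_aux {τ : ℂ} (hτ : 0 < τ.im) (f : Lam' τ → ℂ → ℂ) {R C : ℝ} (hR : 0 < R)
    (hdiff : ∀ ω : Lam' τ, ∀ z : ℂ, z ≠ (ω : ℂ) → DifferentiableAt ℂ (f ω) z)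
    (hbound : ∀ ω : Lam' τ, 2 * R ≤ ‖(ω : ℂ)‖ → ∀ z ∈ Metric.ball (0:ℂ) R,
      ‖f ω z‖ ≤ C / ‖(ω : ℂ)‖ ^ 3)
    {z₀ : ℂ} (hz₀ : z₀ ∈ Metric.ball (0:ℂ) R) (hz : z₀ ∉ Lam' τ) :
    AnalyticAt ℂ (fun z => ∑' ω : Lam' τ, f ω z) z₀ := by
  classical
  set F : Finset (Lam' τ) := (finite_lam' hτ (2*R)).toFinset with hF
  have hnotF : ∀ ω : Lam' τ, ω ∉ F → 2*R ≤ ‖(ω:ℂ)‖ := by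
    intro ω hω
    by_contra h
    apply hω
    rw [hF, Set.Finite.mem_toFinset]
    exact le_of_lt (lt_of_not_ge h)
  have hne_ball : ∀ (ω : Lam' τ), ω ∉ F → ∀ z ∈ Metric.ball (0:ℂ) R, z ≠ (ω : ℂ) := by
    intro ω hω z hzb hzeq
    have h1 : ‖z‖ < R := mem_ball_zero_iff.mp hzb
    have h2 := hnotF ω hω
    rw [hzeq] at h1
    linarith
  have hsummableC : Summable (fun ω : Lam' τ => C / ‖(ω:ℂ)‖^3) := by
    have := (summable_lam' hτ).mul_left C
    apply this.congr
    intro ω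
    ring
  have htu : TendstoUniformlyOn
      (fun (t : Finset {x : Lam' τ // x ∉ F}) z => ∑ ω ∈ t, f ω z)
      (fun z => ∑' ω : {x : Lam' τ // x ∉ F}, f ω z) atTop (Metric.ball (0:ℂ) R) := by
    apply tendstoUniformlyOn_tsum (hsummableC.subtype _)
    intro ω z hzb
    exact hbound ω (hnotF ω ω.2) z hzb
  have htail_diff : DifferentiableOn ℂ
      (fun z => ∑' ω : {x : Lam' τ // x ∉ F}, f ω z) (Metric.ball (0:ℂ) R) := by
    apply htu.tendstoLocallyUniformlyOn.differentiableOn ?_ Metric.isOpen_ball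
    filter_upwards with t
    apply DifferentiableOn.fun_sum
    intro ω _
    intro z hzb
    exact ((hdiff ω z (hne_ball ω ω.2 z hzb)).differentiableWithinAt)
  have hsum : ∀ z ∈ Metric.ball (0:ℂ) R, Summable (fun ω : Lam' τ => f ω z) := by
    intro z hzb
    rw [← F.summable_compl_iff]
    apply Summable.of_norm_bounded (hsummableC.subtype _)
    intro ω
    exact hbound ω (hnotF ω ω.2) z hzb
  set E : Set ℂ := (↑) '' (F : Set (Lam' τ)) with hE
  have hEfin : E.Finite := (F.finite_toSet).image _
  set s : Set ℂ := Metric.ball (0:ℂ) R \ E with hs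
  have hso : IsOpen s := Metric.isOpen_ball.sdiff hEfin.isClosed
  have hz₀s : z₀ ∈ s := by
    refine ⟨hz₀, fun h => hz ?_⟩
    obtain ⟨ω, -, rfl⟩ := h
    exact ω.2
  have hd : DifferentiableOn ℂ (fun z => ∑' ω : Lam' τ, f ω z) s := by
    have heq : ∀ z ∈ s, (∑ ω ∈ F, f ω z) + (∑' ω : {x : Lam' τ // x ∉ F}, f ω z)
        = ∑' ω : Lam' τ, f ω z := fun z hzs => Summable.sum_add_tsum_compl (hsum z hzs.1)
    apply DifferentiableOn.congr (f := fun z => (∑ ω ∈ F, f ω z) + (∑' ω : {x : Lam' τ // x ∉ F}, f ω z)) ?_ (fun z hzs => (heq z hzs).symm)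
    apply DifferentiableOn.add
    · apply DifferentiableOn.fun_sum
      intro ω hω z hzs
      have hne : z ≠ (ω : ℂ) := fun h => hzs.2 ⟨ω, by simpa using hω, h.symm⟩
      exact (hdiff ω z hne).differentiableWithinAt
    · exact htail_diff.mono Set.diff_subset
  exact (hd.analyticOnNhd hso) z₀ hz₀s


def zt (τ z : ℂ) : ℂ := ∑' ω : Lam' τ, (1 / (z - (ω : ℂ)) + 1 / (ω : ℂ) + z / (ω : ℂ) ^ 2)

def pt (τ z : ℂ) : ℂ := ∑' ω : Lam' τ, (1 / (z - (ω : ℂ)) ^ 2 - 1 / (ω : ℂ) ^ 2)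

lemma wzeta_eq (τ z : ℂ) : wzeta τ z = 1 / z + zt τ z := rfl
lemma wp_eq (τ z : ℂ) : wp τ z = 1 / z ^ 2 + pt τ z := rfl

lemma norm_sub_lower {z ω : ℂ} {R : ℝ} (hz : ‖z‖ < R) (hω : 2 * R ≤ ‖ω‖) (hR : 0 < R) :
    ‖ω‖ / 2 ≤ ‖z - ω‖ := by
  have := norm_sub_norm_le ω z
  have h2 : ‖ω - z‖ = ‖z - ω‖ := norm_sub_rev ω z
  linarith

lemma zt_analytic {τ : ℂ} (hτ : 0 < τ.im) {z₀ : ℂ} (hz : z₀ ∉ Lam' τ) :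
    AnalyticAt ℂ (zt τ) z₀ := by
  set R : ℝ := ‖z₀‖ + 1 with hRdef
  have hR : 0 < R := by positivity
  apply analyticAt_tsum_aux hτ _ hR (C := 2 * R ^ 2)
  · intro ω z hne
    have h1 : DifferentiableAt ℂ (fun z => 1 / (z - (ω:ℂ))) z := by
      simp only [one_div]
      exact (differentiableAt_id.sub (differentiableAt_const _)).inv (sub_ne_zero.mpr hne)
    exact (h1.add (differentiableAt_const _)).add (differentiableAt_id.div_const _)
  · intro ω hω z hzb
    have hz' : ‖z‖ < R := mem_ball_zero_iff.mp hzb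
    have hω0 : (ω : ℂ) ≠ 0 := ω.2.2
    have hd2 : ‖(ω:ℂ)‖ / 2 ≤ ‖z - ω‖ := norm_sub_lower hz' hω hR
    have hωpos : 0 < ‖(ω:ℂ)‖ := norm_pos_iff.mpr hω0
    have hzω : z - (ω:ℂ) ≠ 0 := by
      rw [← norm_pos_iff]
      linarith
    have hid : 1/(z - (ω:ℂ)) + 1/(ω:ℂ) + z/(ω:ℂ)^2 = z^2 / ((ω:ℂ)^2 * (z - (ω:ℂ))) := by
      field_simp
      ring
    rw [hid, norm_div, norm_mul, norm_pow, norm_pow]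
    have key : ‖z‖^2 / (‖(ω:ℂ)‖^2 * ‖z - (ω:ℂ)‖) ≤ R^2 / (‖(ω:ℂ)‖^2 * (‖(ω:ℂ)‖/2)) := by
      apply div_le_div₀ (by positivity) ?_ (by positivity) ?_
      · exact pow_le_pow_left₀ (norm_nonneg z) hz'.le 2
      · gcongr
    have keq : R^2 / (‖(ω:ℂ)‖^2 * (‖(ω:ℂ)‖/2)) = 2 * R^2 / ‖(ω:ℂ)‖^3 := by
      rw [div_eq_div_iff (by positivity) (by positivity)]
      ring
    rw [keq] at key
    exact key
  · exact mem_ball_zero_iff.mpr (by rw [hRdef]; linarith)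
  · exact hz

lemma pt_analytic {τ : ℂ} (hτ : 0 < τ.im) {z₀ : ℂ} (hz : z₀ ∉ Lam' τ) :
    AnalyticAt ℂ (pt τ) z₀ := by
  set R : ℝ := ‖z₀‖ + 1 with hRdef
  have hR : 0 < R := by positivity
  apply analyticAt_tsum_aux hτ _ hR (C := 10 * R)
  · intro ω z hne
    have h1 : DifferentiableAt ℂ (fun z => 1 / (z - (ω:ℂ)) ^ 2) z := by
      simp only [one_div]
      exact (((differentiableAt_id.sub (differentiableAt_const _)).pow 2).inv
        (pow_ne_zero 2 (sub_ne_zero.mpr hne)))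
    exact h1.sub (differentiableAt_const _)
  · intro ω hω z hzb
    have hz' : ‖z‖ < R := mem_ball_zero_iff.mp hzb
    have hω0 : (ω : ℂ) ≠ 0 := ω.2.2
    have hd2 : ‖(ω:ℂ)‖ / 2 ≤ ‖z - ω‖ := norm_sub_lower hz' hω hR
    have hωpos : 0 < ‖(ω:ℂ)‖ := norm_pos_iff.mpr hω0
    have hzω : z - (ω:ℂ) ≠ 0 := by
      rw [← norm_pos_iff]
      linarith
    have hid : 1/(z - (ω:ℂ))^2 - 1/(ω:ℂ)^2
        = z * (2 * (ω:ℂ) - z) / ((ω:ℂ)^2 * (z - (ω:ℂ))^2) := by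
      field_simp
      ring
    rw [hid, norm_div, norm_mul, norm_mul, norm_pow, norm_pow]
    have hnum : ‖z‖ * ‖2 * (ω:ℂ) - z‖ ≤ R * (5/2 * ‖(ω:ℂ)‖) := by
      have h3 : ‖2 * (ω:ℂ) - z‖ ≤ 2 * ‖(ω:ℂ)‖ + ‖z‖ := by
        calc ‖2 * (ω:ℂ) - z‖ ≤ ‖2 * (ω:ℂ)‖ + ‖z‖ := norm_sub_le _ _
          _ = 2 * ‖(ω:ℂ)‖ + ‖z‖ := by rw [norm_mul]; norm_num
      have h4 : ‖z‖ ≤ ‖(ω:ℂ)‖ / 2 := by linarith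
      nlinarith [norm_nonneg z, norm_nonneg (2 * (ω:ℂ) - z)]
    have key : ‖z‖ * ‖2 * (ω:ℂ) - z‖ / (‖(ω:ℂ)‖^2 * ‖z - (ω:ℂ)‖^2)
        ≤ R * (5/2 * ‖(ω:ℂ)‖) / (‖(ω:ℂ)‖^2 * (‖(ω:ℂ)‖/2)^2) := by
      apply div_le_div₀ (by positivity) hnum (by positivity) ?_
      gcongr
    have keq : R * (5/2 * ‖(ω:ℂ)‖) / (‖(ω:ℂ)‖^2 * (‖(ω:ℂ)‖/2)^2) = 10 * R / ‖(ω:ℂ)‖^3 := by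
      rw [div_eq_div_iff (by positivity) (by positivity)]
      ring
    rw [keq] at key
    exact key
  · exact mem_ball_zero_iff.mpr (by rw [hRdef]; linarith)
  · exact hz

lemma zt_zero (τ : ℂ) : zt τ 0 = 0 := by
  have h : ∀ ω : Lam' τ, (1 / ((0:ℂ) - (ω:ℂ)) + 1 / (ω:ℂ) + (0:ℂ) / (ω:ℂ)^2) = 0 := by
    intro ω
    rw [zero_sub, zero_div, div_neg]
    ring
  unfold zt
  rw [tsum_congr h, tsum_zero]

lemma lam_zero (τ : ℂ) : (0:ℂ) ∈ Lam τ := ⟨0, 0, by simp⟩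

lemma lam_neg {τ ω : ℂ} (h : ω ∈ Lam τ) : -ω ∈ Lam τ := by
  obtain ⟨m, n, rfl⟩ := h
  exact ⟨-m, -n, by push_cast; ring⟩

lemma lam_neg_iff {τ ω : ℂ} : -ω ∈ Lam τ ↔ ω ∈ Lam τ :=
  ⟨fun h => by simpa using lam_neg h, lam_neg⟩

lemma lam_add {τ a b : ℂ} (ha : a ∈ Lam τ) (hb : b ∈ Lam τ) : a + b ∈ Lam τ := by
  obtain ⟨m, n, rfl⟩ := ha
  obtain ⟨m', n', rfl⟩ := hb
  exact ⟨m + m', n + n', by push_cast; ring⟩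

def negEquiv (τ : ℂ) : Lam' τ ≃ Lam' τ where
  toFun ω := ⟨-ω, lam_neg ω.2.1, neg_ne_zero.mpr ω.2.2⟩
  invFun ω := ⟨-ω, lam_neg ω.2.1, neg_ne_zero.mpr ω.2.2⟩
  left_inv ω := by simp
  right_inv ω := by simp

lemma wzeta_neg (τ z : ℂ) : wzeta τ (-z) = - wzeta τ z := by
  unfold wzeta
  have key : ∑' ω : Lam' τ, (1 / (-z - (ω : ℂ)) + 1 / (ω : ℂ) + (-z) / (ω : ℂ) ^ 2)
      = ∑' ω : Lam' τ, -(1 / (z - (ω : ℂ)) + 1 / (ω : ℂ) + z / (ω : ℂ) ^ 2) := by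
    rw [← Equiv.tsum_eq (negEquiv τ) (fun ω : Lam' τ => (1 / (-z - (ω : ℂ)) + 1 / (ω : ℂ) + (-z) / (ω : ℂ) ^ 2))]
    apply tsum_congr
    intro ω
    show 1 / (-z - (-(ω:ℂ))) + 1 / (-(ω:ℂ)) + (-z) / (-(ω:ℂ)) ^ 2 = _
    rw [show -z - (-(ω:ℂ)) = -(z - (ω:ℂ)) by ring, show (-(ω:ℂ))^2 = (ω:ℂ)^2 by ring,
      div_neg, div_neg, neg_div]
    ring
  rw [key, tsum_neg]
  rw [div_neg]
  ring

lemma wzeta_analytic {τ : ℂ} (hτ : 0 < τ.im) {z₀ : ℂ} (hz : z₀ ∉ Lam τ) :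
    AnalyticAt ℂ (wzeta τ) z₀ := by
  have hz0 : z₀ ≠ 0 := fun h => hz (h ▸ lam_zero τ)
  have h1 : AnalyticAt ℂ (fun z : ℂ => 1 / z) z₀ := by
    simp only [one_div]
    exact (analyticAt_id (𝕜 := ℂ)).inv hz0
  exact h1.add (zt_analytic hτ (fun h => hz h.1))

lemma wp_analytic {τ : ℂ} (hτ : 0 < τ.im) {z₀ : ℂ} (hz : z₀ ∉ Lam τ) :
    AnalyticAt ℂ (wp τ) z₀ := by
  have hz0 : z₀ ≠ 0 := fun h => hz (h ▸ lam_zero τ)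
  have h1 : AnalyticAt ℂ (fun z : ℂ => 1 / z ^ 2) z₀ := by
    simp only [one_div]
    exact ((analyticAt_id (𝕜 := ℂ)).pow 2).inv (pow_ne_zero 2 hz0)
  exact h1.add (pt_analytic hτ (fun h => hz h.1))

lemma wzeta_shift_analytic {τ : ℂ} (hτ : 0 < τ.im) {b x : ℂ} (hb : x + b ∉ Lam τ) :
    AnalyticAt ℂ (fun z => wzeta τ (z + b)) x := by
  have hinner : AnalyticAt ℂ (fun z : ℂ => z + b) x :=
    (analyticAt_id (𝕜 := ℂ)).add analyticAt_const
  exact AnalyticAt.comp (g := wzeta τ) (f := fun z : ℂ => z + b) (wzeta_analytic hτ hb) hinner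

lemma wp_shift_analytic {τ : ℂ} (hτ : 0 < τ.im) {b x : ℂ} (hb : x + b ∉ Lam τ) :
    AnalyticAt ℂ (fun z => wp τ (z + b)) x := by
  have hinner : AnalyticAt ℂ (fun z : ℂ => z + b) x :=
    (analyticAt_id (𝕜 := ℂ)).add analyticAt_const
  exact AnalyticAt.comp (g := wp τ) (f := fun z : ℂ => z + b) (wp_analytic hτ hb) hinner

lemma analyticAt_deriv' {f : ℂ → ℂ} {x : ℂ} (hf : AnalyticAt ℂ f x) :
    AnalyticAt ℂ (deriv f) x := by
  obtain ⟨s, hs, hf'⟩ := hf.eventually_analyticAt.exists_mem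
  exact (AnalyticOnNhd.deriv (fun y hy => hf' y hy)) x (mem_of_mem_nhds hs)

lemma analyticAt_dslope' {f : ℂ → ℂ} {x : ℂ} (hf : AnalyticAt ℂ f x) :
    AnalyticAt ℂ (dslope f x) x := by
  obtain ⟨p, hp⟩ := hf
  exact ⟨p.fslope, hp.has_fpower_series_dslope_fslope⟩


/-- `g` has at most a simple pole at `0` with residue
`2(ζ(a₁)+ζ(a₂)−c)`; it extends holomorphically across `0` iff `c = ζ(a₁)+ζ(a₂)`. -/
theorem stmt_8 (τ p a₁ a₂ c A : ℂ) (hτ : 0 < τ.im) (hp : 2 * p ∉ Lam τ)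
    (h12 : a₁ - a₂ ∉ Lam τ) (ha₁ : a₁ ∉ Sset τ p) (ha₂ : a₂ ∉ Sset τ p) :
    Tendsto (fun z => z * gfun τ p a₁ a₂ c A z) (𝓝[≠] (0 : ℂ))
      (𝓝 (2 * (wzeta τ a₁ + wzeta τ a₂ - c))) ∧
    ((∃ g₀ : ℂ → ℂ, AnalyticAt ℂ g₀ 0 ∧
        ∀ᶠ z in 𝓝[≠] (0 : ℂ), g₀ z = gfun τ p a₁ a₂ c A z) ↔
      c = wzeta τ a₁ + wzeta τ a₂) := by
  have ha₁L : a₁ ∉ Lam τ := fun h => ha₁ (Or.inl (Or.inl h))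
  have ha₂L : a₂ ∉ Lam τ := fun h => ha₂ (Or.inl (Or.inl h))
  have hpL : p ∉ Lam τ := fun h => hp (by simpa [two_mul] using lam_add h h)
  have hpL' : -p ∉ Lam τ := fun h => hpL (by simpa using lam_neg h)
  have hna₁ : -a₁ ∉ Lam τ := fun h => ha₁L (by simpa using lam_neg h)
  have hna₂ : -a₂ ∉ Lam τ := fun h => ha₂L (by simpa using lam_neg h)
  have h0L' : (0:ℂ) ∉ Lam' τ := fun h => h.2 rfl
  set w : ℂ → ℂ := fun z => c + wzeta τ (z + -a₁) + wzeta τ (z + -a₂) - zt τ z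
      - 1/2 * (wzeta τ (z + p) + wzeta τ (z + -p)) with hwdef
  set Q : ℂ → ℂ := fun z => 3/4 * (wp τ (z + p) + wp τ (z + -p))
      + A * (wzeta τ (z + p) - wzeta τ (z + -p)) + Bc τ p A with hQdef
  have hw : AnalyticAt ℂ w 0 := by
    apply AnalyticAt.sub
    apply AnalyticAt.sub
    · exact (analyticAt_const.add (wzeta_shift_analytic hτ (by simpa using hna₁))).add
        (wzeta_shift_analytic hτ (by simpa using hna₂))
    · exact zt_analytic hτ h0L'
    · exact analyticAt_const.mul ((wzeta_shift_analytic hτ (by simpa using hpL)).add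
        (wzeta_shift_analytic hτ (by simpa using hpL')))
  have hQ : AnalyticAt ℂ Q 0 := by
    apply AnalyticAt.add
    apply AnalyticAt.add
    · exact analyticAt_const.mul ((wp_shift_analytic hτ (by simpa using hpL)).add
        (wp_shift_analytic hτ (by simpa using hpL')))
    · exact analyticAt_const.mul ((wzeta_shift_analytic hτ (by simpa using hpL)).sub
        (wzeta_shift_analytic hτ (by simpa using hpL')))
    · exact analyticAt_const
  have hpt : AnalyticAt ℂ (pt τ) 0 := pt_analytic hτ h0L'
  have hphi : ∀ z : ℂ, phiac τ p a₁ a₂ c z = w z - 1/z := by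
    intro z
    rw [hwdef]
    unfold phiac
    rw [wzeta_eq τ z]
    simp only [sub_eq_add_neg]
    ring
  have hq : ∀ z : ℂ, qpot τ p A z = 2 * (1/z^2) + 2 * pt τ z + Q z := by
    intro z
    rw [hQdef]
    unfold qpot
    rw [wp_eq τ z]
    simp only [sub_eq_add_neg]
    ring
  have hev : ∀ᶠ z in 𝓝 (0:ℂ), DifferentiableAt ℂ w z :=
    hw.eventually_analyticAt.mono (fun z hz => hz.differentiableAt)
  have hg : ∀ᶠ z in 𝓝[≠] (0:ℂ), gfun τ p a₁ a₂ c A z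
      = deriv w z - 2 * (w z / z) + (w z)^2 - 2 * pt τ z - Q z := by
    filter_upwards [eventually_mem_nhdsWithin, eventually_nhdsWithin_of_eventually_nhds hev]
      with z hz0 hwz
    have hz0' : z ≠ 0 := hz0
    have hder : deriv (phiac τ p a₁ a₂ c) z = deriv w z + (z^2)⁻¹ := by
      have he : phiac τ p a₁ a₂ c = fun z => w z - 1/z := funext hphi
      rw [he]
      have hdiv : DifferentiableAt ℂ (fun z : ℂ => 1/z) z := by
        simp only [one_div]
        exact differentiableAt_inv hz0'
      rw [deriv_fun_sub hwz hdiv]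
      have : deriv (fun z : ℂ => 1/z) z = -(z^2)⁻¹ := by
        simp only [one_div]
        exact deriv_inv
      rw [this]
      ring
    unfold gfun
    rw [hder, hphi z, hq z]
    field_simp
    ring
  have hw0 : w 0 = c - wzeta τ a₁ - wzeta τ a₂ := by
    rw [hwdef]
    simp only [zero_add]
    rw [zt_zero, wzeta_neg τ a₁, wzeta_neg τ a₂, wzeta_neg τ p]
    ring
  have hcont : Tendsto (fun z => z * deriv w z - 2 * w z + z * (w z)^2 - 2*z*pt τ z - z*Q z)
      (𝓝 (0:ℂ)) (𝓝 (2 * (wzeta τ a₁ + wzeta τ a₂ - c))) := by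
    have hca : ContinuousAt (fun z => z * deriv w z - 2 * w z + z * (w z)^2
        - 2*z*pt τ z - z*Q z) 0 := by
      have h1 := (analyticAt_deriv' hw).continuousAt
      have h2 := hw.continuousAt
      have h3 := hpt.continuousAt
      have h4 := hQ.continuousAt
      fun_prop
    have := hca.tendsto
    simp only [zero_mul, mul_zero, sub_zero, zero_sub, zero_add] at this
    convert this using 2
    rw [hw0]
    ring
  have hpart1 : Tendsto (fun z => z * gfun τ p a₁ a₂ c A z) (𝓝[≠] (0:ℂ))
      (𝓝 (2 * (wzeta τ a₁ + wzeta τ a₂ - c))) := by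
    apply Tendsto.congr' ?_ (hcont.mono_left nhdsWithin_le_nhds)
    filter_upwards [hg, eventually_mem_nhdsWithin] with z hgz hz0
    have hz0' : z ≠ 0 := hz0
    rw [hgz]
    field_simp
  refine ⟨hpart1, ?_, ?_⟩
  · rintro ⟨g₀, hg₀, hgeq⟩
    have h2 : Tendsto (fun z => z * g₀ z) (𝓝 (0:ℂ)) (𝓝 (0 * g₀ 0)) :=
      (continuousAt_id.mul hg₀.continuousAt).tendsto
    rw [zero_mul] at h2
    have h1 : Tendsto (fun z => z * gfun τ p a₁ a₂ c A z) (𝓝[≠] (0:ℂ)) (𝓝 0) := by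
      apply Tendsto.congr' ?_ (h2.mono_left nhdsWithin_le_nhds)
      filter_upwards [hgeq] with z hz
      rw [hz]
    have huniq := tendsto_nhds_unique hpart1 h1
    have h2ne : (2:ℂ) ≠ 0 := two_ne_zero
    linear_combination (-(1:ℂ)/2) * huniq
  · intro hc
    have hw00 : w 0 = 0 := by rw [hw0, hc]; ring
    refine ⟨fun z => deriv w z - 2 * dslope w 0 z + (w z)^2 - 2*pt τ z - Q z, ?_, ?_⟩
    · exact ((((analyticAt_deriv' hw).sub (analyticAt_const.mul (analyticAt_dslope' hw))).add
        (hw.pow 2)).sub (analyticAt_const.mul hpt)).sub hQ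
    · filter_upwards [hg, eventually_mem_nhdsWithin] with z hgz hz0
      have hz0' : z ≠ 0 := hz0
      rw [hgz, dslope_of_ne _ hz0', slope_def_field, hw00, sub_zero, sub_zero]
end
end

section
/- For ρ = e^{πi/3} and a = (1+ρ)/3, the Weierstrass elliptic function of the lattice Λ_ρ satisfies ℘(a; ρ) = 0. -/
open Complex Filter Topology

noncomputable section

-- ### Auxiliary development ###

def rr : ℂ := Complex.exp (Real.pi * Complex.I / 3)
lemma rr_eq : rr = Complex.mk (1/2) (Real.sqrt 3 / 2) := by
  rw [rr]
  have h : (Real.pi : ℂ) * Complex.I / 3 = (Real.pi/3 : ℝ) * Complex.I := by push_cast; ring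
  rw [h, Complex.exp_mul_I, ← Complex.ofReal_cos, ← Complex.ofReal_sin,
    Real.cos_pi_div_three, Real.sin_pi_div_three]
  apply Complex.ext <;> simp
lemma rr_sq : rr ^ 2 = rr - 1 := by
  rw [rr_eq]
  have h3 : Real.sqrt 3 ^ 2 = 3 := Real.sq_sqrt (by norm_num)
  apply Complex.ext <;>
    simp [pow_two, Complex.ext_iff, Complex.mul_re, Complex.mul_im, Complex.sub_re,
      Complex.sub_im, Complex.one_re, Complex.one_im] <;> nlinarith [h3]
lemma rr_ne_zero : rr ≠ 0 := Complex.exp_ne_zero _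
lemma rr_sq_ne_one : rr ^ 2 ≠ 1 := by
  rw [rr_sq, rr_eq]
  intro h
  have := congrArg Complex.im h
  simp [Complex.sub_im] at this


def ee (x : Fin 2 → ℤ) : ℂ := (x 0 : ℂ) + (x 1 : ℂ) * rr

lemma ee_re (x : Fin 2 → ℤ) : (ee x).re = (x 0 : ℝ) + (x 1 : ℝ) / 2 := by
  simp [ee, rr_eq, Complex.add_re, Complex.mul_re]; ring
lemma ee_im (x : Fin 2 → ℤ) : (ee x).im = (x 1 : ℝ) * (Real.sqrt 3 / 2) := by
  simp [ee, rr_eq, Complex.add_im, Complex.mul_im]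

lemma ee_inj : Function.Injective ee := by
  intro x y h
  have h3 : Real.sqrt 3 > 0 := Real.sqrt_pos.mpr (by norm_num)
  have him := congrArg Complex.im h
  rw [ee_im, ee_im] at him
  have h1 : (x 1 : ℝ) = (y 1 : ℝ) := by
    have := mul_right_cancel₀ (by positivity : Real.sqrt 3 / 2 ≠ 0) him
    exact this
  have hre := congrArg Complex.re h
  rw [ee_re, ee_re, h1] at hre
  have h0 : (x 0 : ℝ) = (y 0 : ℝ) := by linarith
  funext i
  match i with
  | 0 => exact_mod_cast h0
  | 1 => exact_mod_cast h1

lemma ee_zero : ee 0 = 0 := by simp [ee]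
lemma ee_add (x y : Fin 2 → ℤ) : ee (x + y) = ee x + ee y := by
  simp [ee]; push_cast; ring

lemma range_ee : Set.range ee = Lam rr := by
  ext w
  constructor
  · rintro ⟨x, rfl⟩; exact ⟨x 0, x 1, rfl⟩
  · rintro ⟨m, n, rfl⟩; exact ⟨![m, n], by simp [ee]⟩

lemma ee_mem_Lam' {x : Fin 2 → ℤ} (hx : x ≠ 0) : ee x ∈ Lam' rr := by
  refine ⟨range_ee ▸ ⟨x, rfl⟩, fun h => hx (ee_inj (h.trans ee_zero.symm))⟩

def EE : {x : Fin 2 → ℤ // x ≠ 0} ≃ (Lam' rr) :=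
  Equiv.ofBijective (fun x => ⟨ee x.1, ee_mem_Lam' x.2⟩)
    (by
      constructor
      · intro x y h
        exact Subtype.ext (ee_inj (congrArg Subtype.val h))
      · rintro ⟨w, hw, hw0⟩
        obtain ⟨x, rfl⟩ := range_ee.symm ▸ hw
        exact ⟨⟨x, fun h => hw0 (h ▸ ee_zero)⟩, rfl⟩)

def G (z : ℂ) (x : Fin 2 → ℤ) : ℂ := 1/(z - ee x)^2 - 1/(ee x)^2

lemma sq_norm_ee (x : Fin 2 → ℤ) :
    ‖ee x‖^2 = ((x 0 : ℝ) + (x 1 : ℝ)/2)^2 + 3 * ((x 1 : ℝ))^2/4 := by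
  have h3 : Real.sqrt 3 * Real.sqrt 3 = 3 := Real.mul_self_sqrt (by norm_num)
  rw [Complex.sq_norm, Complex.normSq_apply, ee_re, ee_im]
  ring_nf
  nlinarith [h3]

lemma norm_x_le (x : Fin 2 → ℤ) : ‖x‖ ≤ 2 * ‖ee x‖ := by
  have h1 : ‖x‖ ≤ |(x 0 : ℝ)| + |(x 1 : ℝ)| := by
    rw [EisensteinSeries.norm_eq_max_natAbs]
    have e0 : ((x 0).natAbs : ℝ) = |(x 0 : ℝ)| := by
      rw [Nat.cast_natAbs]; push_cast; ring
    have e1 : ((x 1).natAbs : ℝ) = |(x 1 : ℝ)| := by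
      rw [Nat.cast_natAbs]; push_cast; ring
    have : ((max (x 0).natAbs (x 1).natAbs : ℕ) : ℝ) = max |(x 0 : ℝ)| |(x 1 : ℝ)| := by
      rw [Nat.cast_max, e0, e1]
    rw [this]
    exact max_le (le_add_of_nonneg_right (abs_nonneg _)) (le_add_of_nonneg_left (abs_nonneg _))
  have h2 : (|(x 0 : ℝ)| + |(x 1 : ℝ)|)^2 ≤ (2 * ‖ee x‖)^2 := by
    have := sq_norm_ee x
    nlinarith [_root_.sq_abs ((x 0 : ℝ)), _root_.sq_abs ((x 1 : ℝ)),
      abs_nonneg ((x 0:ℝ)), abs_nonneg ((x 1:ℝ)),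
      sq_nonneg (|(x 0 : ℝ)| - |(x 1 : ℝ)|), sq_nonneg ((x 0:ℝ) + (x 1:ℝ)), norm_nonneg (ee x)]
  have h2' : |(x 0 : ℝ)| + |(x 1 : ℝ)| ≤ 2 * ‖ee x‖ := by
    nlinarith [abs_nonneg ((x 0:ℝ)), abs_nonneg ((x 1:ℝ)), norm_nonneg (ee x)]
  linarith

lemma finite_small (R : ℝ) : {x : Fin 2 → ℤ | ‖x‖ < R}.Finite := by
  apply Set.Finite.subset (Set.Finite.pi (fun i : Fin 2 => Set.finite_Icc (-⌈R⌉) ⌈R⌉))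
  intro x hx
  simp only [Set.mem_setOf_eq] at hx
  intro i _
  simp only [Set.mem_Icc]
  have h1 : ‖x i‖ ≤ ‖x‖ := norm_le_pi_norm x i
  rw [Int.norm_eq_abs] at h1
  have h2 : |(x i : ℝ)| ≤ (⌈R⌉ : ℝ) := (h1.trans_lt hx).le.trans (Int.le_ceil R)
  have h3 := abs_le.mp h2
  constructor
  · exact_mod_cast h3.1
  · exact_mod_cast h3.2

lemma summable_G (z : ℂ) : Summable (G z) := by
  set r := ‖z‖ with hr
  have hr0 : 0 ≤ r := norm_nonneg z
  apply Summable.of_norm_bounded_eventually (g := fun x : Fin 2 → ℤ => (100*(r+1)) * ‖x‖ ^ (-(3:ℝ)))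
    ((EisensteinSeries.summable_one_div_norm_rpow (by norm_num)).mul_left _)
  rw [Filter.eventually_cofinite]
  apply Set.Finite.subset (finite_small (16 * (r + 1)))
  intro x hx
  simp only [Set.mem_setOf_eq, not_le] at hx ⊢
  by_contra hc
  push_neg at hc
  apply absurd hx
  push_neg
  set n := ‖ee x‖ with hn
  set m := ‖x‖ with hm
  have hmn : m ≤ 2 * n := norm_x_le x
  have hn8 : 8 * (r+1) ≤ n := by linarith
  have hn0 : (0:ℝ) < n := by linarith
  have hm0 : (0:ℝ) < m := by linarith
  have hee : ee x ≠ 0 := by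
    intro h; rw [hn, h] at hn0; simp at hn0
  have hze : z - ee x ≠ 0 := by
    intro h
    have : n = r := by rw [hn, ← sub_eq_zero.mp h]
    linarith
  have hident : G z x = z * (2 * ee x - z) / ((z - ee x)^2 * (ee x)^2) := by
    rw [G]; field_simp; ring
  have hnum : ‖z * (2 * ee x - z)‖ ≤ r * (3 * n) := by
    rw [norm_mul]
    apply mul_le_mul_of_nonneg_left _ hr0
    calc ‖2 * ee x - z‖ ≤ ‖2 * ee x‖ + ‖z‖ := norm_sub_le _ _
      _ = 2 * n + r := by rw [norm_mul, hr, hn]; norm_num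
      _ ≤ 3 * n := by linarith
  have hden : (n/2)^2 * n^2 ≤ ‖(z - ee x)^2 * (ee x)^2‖ := by
    rw [norm_mul, norm_pow, norm_pow]
    have h1 : n / 2 ≤ ‖z - ee x‖ := by
      have := norm_sub_norm_le (ee x) z
      rw [← hn, ← hr, norm_sub_rev] at this
      linarith
    apply mul_le_mul (pow_le_pow_left₀ (by linarith) h1 2) le_rfl (by positivity) (by positivity)
  have hGle : ‖G z x‖ ≤ r * (3 * n) / ((n/2)^2 * n^2) := by
    rw [hident, norm_div]
    exact div_le_div₀ (by positivity) hnum (by positivity) hden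
  have hrpow : m ^ (-(3:ℝ)) = 1/m^3 := by
    rw [Real.rpow_neg hm0.le, show ((3:ℝ)) = ((3:ℕ):ℝ) by norm_num, Real.rpow_natCast, one_div]
  rw [hrpow]
  calc ‖G z x‖ ≤ r * (3 * n) / ((n/2)^2 * n^2) := hGle
    _ = 12 * r / n^3 := by field_simp; ring
    _ ≤ 100*(r+1) * (1 / m^3) := by
      rw [mul_one_div, div_le_div_iff₀ (by positivity) (by positivity)]
      have hm3 : m^3 ≤ 8*n^3 := by nlinarith [pow_le_pow_left₀ hm0.le hmn 3]
      nlinarith [pow_pos hn0 3]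

lemma ee_neg (x : Fin 2 → ℤ) : ee (-x) = - ee x := by simp [ee]; ring

lemma wp_tsum (z : ℂ) : wp rr z = ∑' x, G z x := by
  classical
  rw [wp]
  have h1 : ∑' ω : Lam' rr, (1 / (z - (ω : ℂ)) ^ 2 - 1 / (ω : ℂ) ^ 2)
      = ∑' x : {x : Fin 2 → ℤ // x ≠ 0}, G z x.1 := by
    rw [← EE.tsum_eq]
    exact tsum_congr fun x => by simp [EE, Equiv.ofBijective, G]
  rw [h1, Summable.tsum_eq_add_tsum_ite (summable_G z) 0]
  congr 1
  · rw [G, ee_zero, sub_zero]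
    simp
  · have h2 : ∑' x : {x : Fin 2 → ℤ // x ≠ 0}, G z x.1
        = ∑' x, Set.indicator {x : Fin 2 → ℤ | x ≠ 0} (G z) x :=
      tsum_subtype {x : Fin 2 → ℤ | x ≠ 0} (G z)
    rw [h2]
    exact tsum_congr fun x => by by_cases h : x = 0 <;> simp [Set.indicator_apply, h]

lemma wp_even (z : ℂ) : wp rr (-z) = wp rr z := by
  rw [wp_tsum, wp_tsum, ← (Equiv.neg (Fin 2 → ℤ)).tsum_eq (G (-z))]
  refine tsum_congr fun x => ?_
  have h1 : -z - ee (Equiv.neg (Fin 2 → ℤ) x) = -(z - ee x) := by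
    simp [ee_neg]; ring
  have h2 : ee (Equiv.neg (Fin 2 → ℤ) x) = - ee x := by simp [ee_neg]
  rw [G, G, h1, h2, neg_sq, neg_sq]

def LL : (Fin 2 → ℤ) ≃ (Fin 2 → ℤ) where
  toFun x := ![-(x 1), x 0 + x 1]
  invFun y := ![y 0 + y 1, -(y 0)]
  left_inv x := by funext i; fin_cases i <;> simp
  right_inv y := by funext i; fin_cases i <;> simp

lemma ee_LL (x : Fin 2 → ℤ) : ee (LL x) = rr * ee x := by
  show ee ![-(x 1), x 0 + x 1] = rr * ee x
  simp only [ee, Matrix.cons_val_zero, Matrix.cons_val_one, Matrix.head_cons]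
  push_cast
  linear_combination (-(x 1 : ℂ)) * rr_sq

lemma wp_scale (z : ℂ) : wp rr (rr * z) = 1/rr^2 * wp rr z := by
  have hterm : ∀ x, G (rr * z) (LL x) = 1/rr^2 * G z x := by
    intro x
    rw [G, G, ee_LL, show rr * z - rr * ee x = rr * (z - ee x) by ring, mul_pow, mul_pow]
    rw [one_div, one_div, one_div, mul_inv, mul_inv]
    ring
  rw [wp_tsum, wp_tsum, ← LL.tsum_eq (G (rr * z)), tsum_congr hterm, tsum_mul_left]

def dd : Fin 2 → ℤ := ![0, 1]
lemma ee_dd : ee dd = rr := by simp [ee, dd]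
def D (x : Fin 2 → ℤ) : ℂ := 1/(ee x)^2 - 1/(ee x + rr)^2
def CD : ℂ := ∑' x, D x

set_option maxHeartbeats 1000000 in
lemma wp_period (z : ℂ) : wp rr (z + rr) = wp rr z + CD := by
  have key : ∀ x, G (z + rr) (Equiv.addRight dd x) = G z x + D x := by
    intro x
    have h : ee (x + dd) = ee x + rr := by rw [ee_add, ee_dd]
    rw [Equiv.coe_addRight, G, G, D, h, show z + rr - (ee x + rr) = z - ee x by ring]
    ring
  have hsum : Summable (fun x => G z x + D x) := by
    have h0 : Summable (fun x => G (z + rr) (Equiv.addRight dd x)) :=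
      (Equiv.summable_iff (Equiv.addRight dd)).mpr (summable_G (z + rr))
    exact h0.congr key
  have hD : Summable D := by
    have := hsum.sub (summable_G z)
    exact this.congr fun x => by ring
  rw [wp_tsum, wp_tsum, ← (Equiv.addRight dd).tsum_eq (G (z + rr))]
  rw [tsum_congr key, Summable.tsum_add (summable_G z) hD]
  rfl

lemma CD_zero : CD = 0 := by
  have h := wp_period (-(rr/2))
  rw [show -(rr/2) + rr = -(-(rr/2)) by ring, wp_even] at h
  exact (left_eq_add.mp h)

/-- for `ρ = e^{πi/3}` and `a = (1+ρ)/3`, `℘(a; ρ) = 0`. -/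
theorem stmt_18 :
    wp (Complex.exp (Real.pi * Complex.I / 3))
      ((1 + Complex.exp (Real.pi * Complex.I / 3)) / 3) = 0 := by
  show wp rr ((1 + rr)/3) = 0
  set a := (1 + rr)/3 with ha
  have h2 : rr * a = -a + rr := by rw [ha]; linear_combination rr_sq / 3
  have h3 : wp rr (rr * a) = wp rr a := by
    rw [h2, wp_period, wp_even, CD_zero, add_zero]
  have h4 : wp rr (rr * a) = 1/rr^2 * wp rr a := wp_scale a
  have h5 : wp rr a * (1 - 1/rr^2) = 0 := by
    rw [mul_sub, mul_one, mul_comm, ← h4, h3, sub_self]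
  rcases mul_eq_zero.mp h5 with h | h
  · exact h
  · exfalso
    apply rr_sq_ne_one
    have hne : rr^2 ≠ 0 := pow_ne_zero 2 rr_ne_zero
    field_simp at h
    exact ((div_eq_one_iff_eq hne).mp (sub_eq_zero.mp h).symm).symm
end
end
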